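/- arXiv:2310.06354 — 2 statements merged into one kernel-verified Lean document; each statement's English description precedes it below -/
import Mathlib

section
/- Let n ≥ 2 and let 𝒯 = {T₁,…,T_t} be a collection (with repetition allowed) of trees on a common vertex set V, where |V| = m, each T_i is a tree with exactly n vertices (V(T_i) ⊆ V), and n divides m. If 𝒯 contains no rainbow tree with n vertices and t = m(n-2)/n, then there is a partition of V into m/n parts V₁,…,V_{m/n}, each of size n, such that every T_i is a spanning tree of one of the parts and each part V_j is the vertex set of exactly n-2 of the trees T_i. -/
/-- `R` is a rainbow tree in the collection `T`: `R` (a subgraph of the complete graph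
on `V`, i.e. a graph on a subset of `V`) is a tree, and there is an injective assignment
of its edges to members of the collection such that each edge lies in the assigned graph. -/
def IsRainbowSubtree {V ι : Type} (T : ι → (⊤ : SimpleGraph V).Subgraph)
    (R : (⊤ : SimpleGraph V).Subgraph) : Prop :=
  R.coe.IsTree ∧
    ∃ g : Sym2 V → ι, Set.InjOn g R.edgeSet ∧ ∀ e ∈ R.edgeSet, e ∈ (T (g e)).edgeSet

/-- The collection `T` contains a rainbow tree with `n` vertices. -/
def HasRainbowTree {V ι : Type} (T : ι → (⊤ : SimpleGraph V).Subgraph) (n : ℕ) : Prop :=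
  ∃ R : (⊤ : SimpleGraph V).Subgraph, IsRainbowSubtree T R ∧ R.verts.ncard = n

open SimpleGraph
set_option linter.unusedSectionVars false

private lemma walk_last_edge {V : Type} {G : SimpleGraph V} :
    ∀ {a b : V} (p : G.Walk a b), a ≠ b → ∃ w, G.Adj w b ∧ s(w, b) ∈ p.edges := by
  intro a b p
  induction p with
  | nil => intro h; exact absurd rfl h
  | @cons u x b h q ih =>
    intro _
    by_cases hxb : x = b
    · subst hxb; exact ⟨u, h, by simp⟩
    · obtain ⟨w, hw, hmem⟩ := ih hxb
      exact ⟨w, hw, by simp [hmem]⟩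

private lemma no_cycle_at_pendant {V : Type} {G : SimpleGraph V} {x y : V} (hxy : x ≠ y)
    (hy : ∀ z, ¬ G.Adj y z) (c : (G ⊔ fromEdgeSet {s(x, y)}).Walk y y) : ¬ c.IsCycle := by
  intro hc
  cases c with
  | nil => exact absurd hc Walk.IsCycle.not_of_nil
  | @cons _ z _ h q =>
    have hz : z = x := by
      rcases h with hG' | hE
      · exact absurd hG' (hy z)
      · have h1 : s(y, z) = s(x, y) := hE.1
        rcases Sym2.eq_iff.mp h1 with ⟨h2, h3⟩ | ⟨h2, h3⟩
        · exact absurd h2.symm hxy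
        · exact h3
    have hzy : z ≠ y := by rw [hz]; exact hxy
    obtain ⟨w, hw, hmem⟩ := walk_last_edge q hzy
    have hwx : s(w, y) = s(x, y) := by
      rcases hw with hG' | hE
      · exact absurd hG'.symm (hy w)
      · exact hE.1
    have heq : s(y, z) = s(w, y) := by
      rw [hz]
      rw [Sym2.eq_swap]
      exact hwx.symm
    have hys : s(y, z) ∈ q.edges := by rw [heq]; exact hmem
    have hnodup := hc.edges_nodup
    rw [Walk.edges_cons] at hnodup
    exact (List.nodup_cons.mp hnodup).1 hys

private lemma acyclic_sup_pendant {V : Type} {G : SimpleGraph V} (hG : G.IsAcyclic)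
    {x y : V} (hxy : x ≠ y) (hy : ∀ z, ¬ G.Adj y z) :
    (G ⊔ fromEdgeSet {s(x, y)}).IsAcyclic := by
  classical
  intro v c hc
  by_cases hys : y ∈ c.support
  · exact no_cycle_at_pendant hxy hy (c.rotate y hys) (hc.rotate hys)
  · have hsub : ∀ e ∈ c.edges, e ∈ G.edgeSet := by
      intro e he
      have h1 := c.edges_subset_edgeSet he
      rw [edgeSet_sup] at h1
      rcases h1 with h1 | h1
      · exact h1
      · exfalso
        rw [edgeSet_fromEdgeSet] at h1
        have h2 : e = s(x, y) := h1.1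
        subst h2
        exact hys (Walk.snd_mem_support_of_mem_edges c he)
    exact hG (c.transfer G hsub) (hc.transfer hsub)

private lemma coe_acyclic_of_spanningCoe {V : Type} {G : SimpleGraph V} {H : G.Subgraph}
    (h : H.spanningCoe.IsAcyclic) : H.coe.IsAcyclic := by
  intro v c hc
  exact h _ ((Walk.map_isCycle_iff_of_injective
    (f := ⟨Subtype.val, fun ha => ha⟩) Subtype.val_injective).mpr hc)

private lemma spanningCoe_sup_pendant {V : Type} {x y : V} (R : (⊤ : SimpleGraph V).Subgraph)
    (hadj : (⊤ : SimpleGraph V).Adj x y) :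
    (R ⊔ (⊤ : SimpleGraph V).subgraphOfAdj hadj).spanningCoe
      = R.spanningCoe ⊔ fromEdgeSet {s(x, y)} := by
  ext a b
  constructor
  · rintro (h | h)
    · exact Or.inl h
    · have h' : s(x, y) = s(a, b) := h
      have hne : a ≠ b := by
        rintro rfl
        rcases Sym2.eq_iff.mp h' with ⟨h1, h2⟩ | ⟨h1, h2⟩ <;>
          exact hadj.ne (h1.trans h2.symm)
      exact Or.inr ⟨h'.symm, hne⟩
  · rintro (h | ⟨h1, _⟩)
    · exact Or.inl h
    · exact Or.inr (Set.mem_singleton_iff.mp h1).symm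

section Machinery

variable {V : Type} [Fintype V] {n t : ℕ}


open scoped Classical in
private noncomputable def Av (T : Fin t → (⊤ : SimpleGraph V).Subgraph) (v : V) :
    Finset (Fin t) :=
  Finset.univ.filter (fun i => v ∈ (T i).verts)

private lemma mem_Av {T : Fin t → (⊤ : SimpleGraph V).Subgraph} {v : V} {i : Fin t} :
    i ∈ Av T v ↔ v ∈ (T i).verts := by
  simp [Av]

/-- Invariant pack for a partially built rainbow tree. -/
private def Pack (T : Fin t → (⊤ : SimpleGraph V).Subgraph) (v : V)
    (R : (⊤ : SimpleGraph V).Subgraph) (g : Sym2 V → Fin t) (S : Finset (Fin t)) : Prop :=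
  v ∈ R.verts ∧ R.Connected ∧ R.spanningCoe.IsAcyclic ∧ S.card + 1 = R.verts.ncard ∧
    Set.InjOn g R.edgeSet ∧ ∀ e ∈ R.edgeSet, e ∈ (T (g e)).edgeSet ∧ g e ∈ S

private lemma pack_hasRainbow {T : Fin t → (⊤ : SimpleGraph V).Subgraph} {v : V}
    {R : (⊤ : SimpleGraph V).Subgraph} {g : Sym2 V → Fin t} {S : Finset (Fin t)}
    (hp : Pack T v R g S) (hn : R.verts.ncard = n) : HasRainbowTree T n := by
  obtain ⟨-, hconn, hacyc, -, hinj, hmem⟩ := hp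
  exact ⟨R, ⟨⟨hconn.coe, coe_acyclic_of_spanningCoe hacyc⟩, g, hinj,
    fun e he => (hmem e he).1⟩, hn⟩

private lemma exists_crossing {H : (⊤ : SimpleGraph V).Subgraph} {W : Set V} :
    ∀ {a b : ↥H.verts} (_ : H.coe.Walk a b), (a : V) ∈ W → (b : V) ∉ W →
      ∃ x y : V, H.Adj x y ∧ x ∈ W ∧ y ∉ W := by
  intro a b w
  induction w with
  | nil => intro h1 h2; exact absurd h1 h2
  | @cons u c b h p ih =>
    intro h1 h2
    by_cases hm : (c : V) ∈ W
    · exact ih hm h2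
    · exact ⟨u, c, h, h1, hm⟩

private lemma pack_extend {T : Fin t → (⊤ : SimpleGraph V).Subgraph}
    (hverts : ∀ i, (T i).verts.ncard = n) (htree : ∀ i, (T i).coe.IsTree)
    {v : V} {R : (⊤ : SimpleGraph V).Subgraph} {g : Sym2 V → Fin t} {S : Finset (Fin t)}
    (hp : Pack T v R g S) (hkn : R.verts.ncard < n) {i : Fin t} (hiS : i ∉ S)
    (hint : ((T i).verts ∩ R.verts).Nonempty) :
    ∃ R' g', Pack T v R' g' (insert i S) ∧ R'.verts.ncard = R.verts.ncard + 1 := by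
  classical
  obtain ⟨hv, hconn, hacyc, hcard, hinj, hmem⟩ := hp
  obtain ⟨a, haT, haR⟩ := hint
  have hnsub : ¬ (T i).verts ⊆ R.verts := by
    intro hsub
    have := Set.ncard_le_ncard hsub (Set.toFinite _)
    rw [hverts i] at this
    omega
  obtain ⟨b, hbT, hbR⟩ := Set.not_subset.mp hnsub
  obtain ⟨wk⟩ := ((htree i).isConnected).preconnected ⟨a, haT⟩ ⟨b, hbT⟩
  obtain ⟨x, y, hxyadj, hxR, hyR⟩ := exists_crossing wk haR hbR
  have hxy : x ≠ y := fun h => hyR (h ▸ hxR)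
  have hadj : (⊤ : SimpleGraph V).Adj x y := by simpa using hxy
  set R' := R ⊔ (⊤ : SimpleGraph V).subgraphOfAdj hadj with hR'
  have hverts' : R'.verts = insert y R.verts := by
    rw [hR', Subgraph.verts_sup, subgraphOfAdj_verts]
    ext z
    constructor
    · rintro (hz | hz)
      · exact Set.mem_insert_of_mem _ hz
      · rcases hz with rfl | hz
        · exact Set.mem_insert_of_mem _ hxR
        · rw [Set.mem_singleton_iff] at hz
          exact hz ▸ Set.mem_insert _ _
    · rintro (rfl | hz)
      · exact Or.inr (Or.inr rfl)
      · exact Or.inl hz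
  have hedges' : R'.edgeSet = insert s(x, y) R.edgeSet := by
    rw [hR', Subgraph.edgeSet_sup, edgeSet_subgraphOfAdj]
    exact Set.union_singleton
  have hnewedge : s(x, y) ∉ R.edgeSet := by
    intro hmem'
    exact hyR (Subgraph.mem_edgeSet.mp hmem').snd_mem
  have hncard' : R'.verts.ncard = R.verts.ncard + 1 := by
    rw [hverts', Set.ncard_insert_of_notMem hyR]
  refine ⟨R', Function.update g s(x, y) i, ⟨?_, ?_, ?_, ?_, ?_, ?_⟩, hncard'⟩
  · rw [hverts']; exact Set.mem_insert_of_mem _ hv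
  · exact Subgraph.connected_sup hconn.preconnected (Subgraph.subgraphOfAdj_connected hadj).preconnected
      ⟨x, by rw [Subgraph.verts_inf]; exact ⟨hxR, by simp⟩⟩
  · have hsc : R'.spanningCoe = R.spanningCoe ⊔ fromEdgeSet {s(x, y)} :=
      spanningCoe_sup_pendant R hadj
    rw [hsc]
    refine acyclic_sup_pendant hacyc hxy (fun z hz => ?_)
    exact hyR (Subgraph.Adj.fst_mem hz)
  · rw [Finset.card_insert_of_notMem hiS, hncard']
    omega
  · rw [hedges']
    intro e he f hf hef
    rcases Set.mem_insert_iff.mp he with rfl | he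
    · rcases Set.mem_insert_iff.mp hf with rfl | hf
      · rfl
      · exfalso
        rw [Function.update_self] at hef
        have hne : f ≠ s(x, y) := fun h => hnewedge (h ▸ hf)
        rw [Function.update_of_ne hne] at hef
        exact hiS (hef ▸ (hmem f hf).2)
    · have hne : e ≠ s(x, y) := fun h => hnewedge (h ▸ he)
      rw [Function.update_of_ne hne] at hef
      rcases Set.mem_insert_iff.mp hf with rfl | hf
      · exfalso
        rw [Function.update_self] at hef
        exact hiS (hef ▸ (hmem e he).2)
      · have hne' : f ≠ s(x, y) := fun h => hnewedge (h ▸ hf)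
        rw [Function.update_of_ne hne'] at hef
        exact hinj he hf hef
  · rw [hedges']
    intro e he
    rcases Set.mem_insert_iff.mp he with rfl | he
    · rw [Function.update_self]
      exact ⟨Subgraph.mem_edgeSet.mpr hxyadj, Finset.mem_insert_self _ _⟩
    · have hne : e ≠ s(x, y) := fun h => hnewedge (h ▸ he)
      rw [Function.update_of_ne hne]
      exact ⟨(hmem e he).1, Finset.mem_insert_of_mem (hmem e he).2⟩


variable {V : Type} [Fintype V] {n t : ℕ}


open scoped Classical in
private lemma Av_sum (T : Fin t → (⊤ : SimpleGraph V).Subgraph)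
    (hverts : ∀ i, (T i).verts.ncard = n) :
    ∑ v : V, (Av T v).card = t * n := by
  calc ∑ v : V, (Av T v).card
      = ∑ v : V, ∑ i : Fin t, if v ∈ (T i).verts then 1 else 0 :=
        Finset.sum_congr rfl (fun v _ => Finset.card_filter _ _)
    _ = ∑ i : Fin t, ∑ v : V, if v ∈ (T i).verts then 1 else 0 := Finset.sum_comm
    _ = ∑ _i : Fin t, n := by
        refine Finset.sum_congr rfl (fun i _ => ?_)
        rw [← Finset.card_filter]
        have hfe : Finset.univ.filter (fun v => v ∈ (T i).verts)
            = (Set.toFinite (T i).verts).toFinset := by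
          ext z; simp [Set.Finite.mem_toFinset]
        rw [hfe, ← Set.ncard_eq_toFinset_card (T i).verts (Set.toFinite _)]
        exact hverts i
    _ = t * n := by rw [Finset.sum_const, Finset.card_univ, Fintype.card_fin, smul_eq_mul]

private lemma pack_singleton (T : Fin t → (⊤ : SimpleGraph V).Subgraph) (ht0 : 0 < t) (v : V) :
    ∃ R g, Pack T v R g (∅ : Finset (Fin t)) ∧ R.verts.ncard = 1 := by
  have hverts : ((⊤ : SimpleGraph V).singletonSubgraph v).verts = {v} :=
    singletonSubgraph_verts _ _
  have hedge : ((⊤ : SimpleGraph V).singletonSubgraph v).edgeSet = ∅ :=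
    edgeSet_singletonSubgraph _
  refine ⟨(⊤ : SimpleGraph V).singletonSubgraph v, fun _ => ⟨0, ht0⟩,
    ⟨?_, ?_, ?_, ?_, ?_, ?_⟩, ?_⟩
  · rw [hverts]; exact Set.mem_singleton v
  · exact Subgraph.singletonSubgraph_connected
  · have h : ((⊤ : SimpleGraph V).singletonSubgraph v).spanningCoe = ⊥ := by
      ext a b
      constructor
      · intro h; exact h.elim
      · intro h; exact h.elim
    rw [h]
    exact isAcyclic_bot
  · rw [hverts, Set.ncard_singleton, Finset.card_empty]
  · rw [hedge]; exact Set.injOn_empty _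
  · intro e he; rw [hedge] at he; exact he.elim
  · rw [hverts, Set.ncard_singleton]

private lemma pack_grow {T : Fin t → (⊤ : SimpleGraph V).Subgraph}
    (hverts : ∀ i, (T i).verts.ncard = n) (htree : ∀ i, (T i).coe.IsTree)
    (ht0 : 0 < t) (v : V) :
    ∀ k, 1 ≤ k → k ≤ n → k ≤ (Av T v).card + 1 →
      ∃ R g S, Pack T v R g S ∧ R.verts.ncard = k ∧ S ⊆ Av T v := by
  intro k
  induction k with
  | zero => omega
  | succ k ih =>
    intro h1 h2 h3
    by_cases hk0 : k = 0
    · subst hk0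
      obtain ⟨R, g, hp, hR1⟩ := pack_singleton T ht0 v
      exact ⟨R, g, ∅, hp, hR1, Finset.empty_subset _⟩
    · obtain ⟨R, g, S, hp, hRk, hSA⟩ := ih (by omega) (by omega) (by omega)
      have hScard := hp.2.2.2.1
      have hex : ∃ i ∈ Av T v, i ∉ S := by
        by_contra hcon
        push_neg at hcon
        have hsub : Av T v ⊆ S := hcon
        have := Finset.card_le_card hsub
        omega
      obtain ⟨i, hiA, hiS⟩ := hex
      obtain ⟨R', g', hp', hn'⟩ := pack_extend hverts htree hp (by omega) hiS
        ⟨v, mem_Av.mp hiA, hp.1⟩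
      exact ⟨R', g', insert i S, hp', by omega, Finset.insert_subset hiA hSA⟩

end Machinery


theorem tree_transversal_extremal_characterization {V : Type} [Fintype V]
    (n m t : ℕ) (hn : 2 ≤ n)
    (hm : Fintype.card V = m) (hdvd : n ∣ m)
    (T : Fin t → (⊤ : SimpleGraph V).Subgraph)
    (htree : ∀ i, (T i).coe.IsTree) (hverts : ∀ i, (T i).verts.ncard = n)
    (hfree : ¬ HasRainbowTree T n)
    (hsize : t = m * (n - 2) / n) :
    ∃ P : Fin (m / n) → Set V,
      (Pairwise fun i j => Disjoint (P i) (P j)) ∧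
      (⋃ j, P j) = Set.univ ∧
      (∀ j, (P j).ncard = n) ∧
      (∀ i, ∃ j, (T i).verts = P j) ∧
      (∀ j, {i : Fin t | (T i).verts = P j}.ncard = n - 2) := by
  classical
  rcases Nat.lt_or_ge n 3 with hn2 | hn3
  · -- n = 2
    have hn2' : n = 2 := by omega
    subst hn2'
    have ht0 : t = 0 := by rw [hsize]; simp
    have e := Fintype.equivFinOfCardEq hm
    obtain ⟨q, hq⟩ := hdvd
    refine ⟨fun j => {z : V | (e z).1 / 2 = j.1}, ?_, ?_, ?_, ?_, ?_⟩
    · intro i j hij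
      rw [Set.disjoint_left]
      intro z hz1 hz2
      simp only [Set.mem_setOf_eq] at hz1 hz2
      exact hij (Fin.ext (hz1 ▸ hz2))
    · ext z
      simp only [Set.mem_iUnion, Set.mem_setOf_eq, Set.mem_univ, iff_true]
      have hlt := (e z).2
      exact ⟨⟨(e z).1 / 2, by omega⟩, rfl⟩
    · intro j
      have hj := j.2
      have hmn : m / 2 * 2 = m := by omega
      have hb1 : 2 * j.1 < m := by omega
      have hb2 : 2 * j.1 + 1 < m := by omega
      have hset : {z : V | (e z).1 / 2 = j.1}
          = {e.symm ⟨2*j.1, hb1⟩, e.symm ⟨2*j.1+1, hb2⟩} := by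
        ext z
        simp only [Set.mem_setOf_eq, Set.mem_insert_iff, Set.mem_singleton_iff]
        constructor
        · intro h
          have hor : (e z).1 = 2*j.1 ∨ (e z).1 = 2*j.1+1 := by omega
          rcases hor with h' | h'
          · left; rw [Equiv.eq_symm_apply]; exact Fin.ext h'
          · right; rw [Equiv.eq_symm_apply]; exact Fin.ext h'
        · rintro (h | h) <;> rw [Equiv.eq_symm_apply] at h <;>
            · have := congrArg Fin.val h; simp at this; omega
      show ({z : V | (e z).1 / 2 = j.1}).ncard = 2
      rw [hset, Set.ncard_pair]
      intro h
      have := congrArg (fun z => (e z).1) h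
      simp at this
    · intro i; exact absurd i.2 (by omega)
    · intro j
      have hempty : {i : Fin t | (T i).verts = {z : V | (e z).1 / 2 = j.1}} = ∅ :=
        Set.eq_empty_of_forall_notMem (fun i _ => absurd i.2 (by omega))
      show ({i : Fin t | (T i).verts = {z : V | (e z).1 / 2 = j.1}}).ncard = 2 - 2
      rw [hempty, Set.ncard_empty]
  · -- n ≥ 3
    obtain ⟨q, hq⟩ := hdvd
    have hnpos : 0 < n := by omega
    have ht : t = q * (n - 2) := by
      rw [hsize, hq]
      have h1 : n * q * (n - 2) = n * (q * (n - 2)) := by ring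
      rw [h1, Nat.mul_div_cancel_left _ hnpos]
    have hle : ∀ v : V, (Av T v).card ≤ n - 2 := by
      intro v
      by_contra hlt
      push_neg at hlt
      have ht0 : 0 < t := by
        obtain ⟨i, -⟩ := Finset.card_pos.mp (by omega : 0 < (Av T v).card)
        exact i.pos
      obtain ⟨R, g, S, hp, hRn, -⟩ := pack_grow hverts htree ht0 v n (by omega) le_rfl (by omega)
      exact hfree (pack_hasRainbow hp hRn)
    have hsum : ∑ v : V, (Av T v).card = t * n := Av_sum T hverts
    have hAcard : ∀ v : V, (Av T v).card = n - 2 := by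
      have htotal : ∑ v : V, (Av T v).card = ∑ _v : V, (n - 2) := by
        rw [hsum, Finset.sum_const, Finset.card_univ, hm, smul_eq_mul, ht, hq]
        ring
      exact fun v => (Finset.sum_eq_sum_iff_of_le (fun v _ => hle v)).mp htotal v
        (Finset.mem_univ v)
    have hmax : ∀ w : V, ∃ R : (⊤ : SimpleGraph V).Subgraph,
        w ∈ R.verts ∧ R.verts.ncard = n - 1 ∧
        (∀ x ∈ R.verts, Av T x = Av T w) ∧ (∀ j ∈ Av T w, R.verts ⊆ (T j).verts) := by
      intro w
      have ht0 : 0 < t := by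
        have hAw := hAcard w
        obtain ⟨i, -⟩ := Finset.card_pos.mp (by omega : 0 < (Av T w).card)
        exact i.pos
      obtain ⟨R, g, S, hp, hRn, hSA⟩ := pack_grow hverts htree ht0 w (n-1)
        (by omega) (by omega) (by rw [hAcard w]; omega)
      have hcardS := hp.2.2.2.1
      have hS : S = Av T w := by
        apply Finset.eq_of_subset_of_card_le hSA
        rw [hAcard w]; omega
      have hnotouch : ∀ j, j ∉ Av T w → ∀ x, x ∈ (T j).verts → x ∉ R.verts := by
        intro j hj x hx1 hx2
        refine hfree ?_
        obtain ⟨R', g', hp', hn'⟩ := pack_extend hverts htree hp (by omega) (hS ▸ hj)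
          ⟨x, hx1, hx2⟩
        exact pack_hasRainbow hp' (by omega)
      have hAx : ∀ x ∈ R.verts, Av T x = Av T w := by
        intro x hx
        apply Finset.eq_of_subset_of_card_le
        · intro j hj
          by_contra hj'
          exact hnotouch j hj' x (mem_Av.mp hj) hx
        · rw [hAcard, hAcard]
      refine ⟨R, hp.1, hRn, hAx, ?_⟩
      intro j hj x hx
      exact mem_Av.mp ((hAx x hx) ▸ hj)
    have hkey : ∀ v : V, ∃ B : Set V, v ∈ B ∧ B.ncard = n ∧
        (∀ x ∈ B, Av T x = Av T v) ∧ (∀ j, (T j).verts = B ↔ j ∈ Av T v) := by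
      intro v
      obtain ⟨R, hvR, hRn, hAx, hsubT⟩ := hmax v
      have hAne : (Av T v).Nonempty := Finset.card_pos.mp (by rw [hAcard]; omega)
      obtain ⟨i0, hi0⟩ := hAne
      have hnsub : ¬ (T i0).verts ⊆ R.verts := by
        intro hsub
        have := Set.ncard_le_ncard hsub (Set.toFinite _)
        rw [hverts i0, hRn] at this
        omega
      obtain ⟨y, hyT, hyR⟩ := Set.not_subset.mp hnsub
      obtain ⟨Ry, hyRy, hRyn, hAxy, hsubTy⟩ := hmax y
      have hysub : Ry.verts ⊆ (T i0).verts := hsubTy i0 (mem_Av.mpr hyT)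
      have hvsub : R.verts ⊆ (T i0).verts := hsubT i0 hi0
      have hcap : (Ry.verts ∩ R.verts).Nonempty := by
        rw [Set.nonempty_iff_ne_empty]
        intro hdis
        have hdisj : Disjoint Ry.verts R.verts := Set.disjoint_iff_inter_eq_empty.mpr hdis
        have h1 := Set.ncard_le_ncard (Set.union_subset hysub hvsub) (Set.toFinite _)
        rw [Set.ncard_union_eq hdisj, hRyn, hRn, hverts i0] at h1
        omega
      obtain ⟨x, hx1, hx2⟩ := hcap
      have hAvy : Av T y = Av T v := by rw [← hAxy x hx1, hAx x hx2]
      refine ⟨insert y R.verts, Set.mem_insert_of_mem _ hvR, ?_, ?_, ?_⟩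
      · rw [Set.ncard_insert_of_notMem hyR, hRn]; omega
      · intro z hz
        rcases Set.mem_insert_iff.mp hz with rfl | hz
        · exact hAvy
        · exact hAx z hz
      · intro j
        constructor
        · intro hEq
          exact mem_Av.mpr (hEq ▸ Set.mem_insert_of_mem _ hvR)
        · intro hj
          have hsub1 : insert y R.verts ⊆ (T j).verts :=
            Set.insert_subset (mem_Av.mp (hAvy ▸ hj)) (hsubT j hj)
          refine (Set.eq_of_subset_of_ncard_le hsub1 ?_ (Set.toFinite _)).symm
          rw [hverts j, Set.ncard_insert_of_notMem hyR, hRn]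
          omega
    choose B hB1 hB2 hB3 hB4 using hkey
    have hB5 : ∀ v x, x ∈ B v → B x = B v := by
      intro v x hx
      have hA := hB3 v x hx
      obtain ⟨i0, hi0⟩ : (Av T v).Nonempty := Finset.card_pos.mp (by rw [hAcard]; omega)
      have h1 : (T i0).verts = B v := (hB4 v i0).mpr hi0
      have h2 : (T i0).verts = B x := (hB4 x i0).mpr (by rw [hA]; exact hi0)
      rw [← h1, h2]
    set clsF : V → Finset V := fun v => (Set.toFinite (B v)).toFinset with hclsF
    have hclsmem : ∀ v x, x ∈ clsF v ↔ x ∈ B v := fun v x => Set.Finite.mem_toFinset _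
    have hclscoe : ∀ v, (↑(clsF v) : Set V) = B v := fun v => Set.Finite.coe_toFinset _
    set F : Finset (Finset V) := Finset.univ.image clsF with hF
    have hFcard_n : ∀ s ∈ F, s.card = n := by
      intro s hs
      obtain ⟨a, -, rfl⟩ := Finset.mem_image.mp hs
      have h := hB2 a
      rwa [Set.ncard_eq_toFinset_card (B a) (Set.toFinite _)] at h
    have hpairB : ∀ a b : V, B a ≠ B b → Disjoint (B a) (B b) := by
      intro a b hne
      rw [Set.disjoint_left]
      intro z hz1 hz2
      exact hne (by rw [← hB5 a z hz1, hB5 b z hz2])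
    have hcover : (Finset.univ : Finset V) = F.biUnion id := by
      ext z
      simp only [Finset.mem_univ, true_iff, Finset.mem_biUnion, id]
      exact ⟨clsF z, Finset.mem_image_of_mem _ (Finset.mem_univ z), (hclsmem z z).mpr (hB1 z)⟩
    have hdisjF : ∀ s ∈ F, ∀ r ∈ F, s ≠ r → Disjoint (id s) (id r) := by
      intro s hs r hr hne
      obtain ⟨a, -, rfl⟩ := Finset.mem_image.mp hs
      obtain ⟨b, -, rfl⟩ := Finset.mem_image.mp hr
      have hBne : B a ≠ B b := by
        intro h
        exact hne (Finset.coe_injective (by rw [hclscoe, hclscoe, h]))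
      rw [Finset.disjoint_left]
      intro z hz1 hz2
      exact (Set.disjoint_left.mp (hpairB a b hBne)) ((hclsmem a z).mp hz1)
        ((hclsmem b z).mp hz2)
    have hmF : F.card * n = m := by
      have h1 : (Finset.univ : Finset V).card = ∑ s ∈ F, (id s).card := by
        rw [hcover]; exact Finset.card_biUnion hdisjF
      rw [Finset.card_univ, hm] at h1
      have h2 : ∑ s ∈ F, (id s).card = F.card * n := by
        calc ∑ s ∈ F, (id s).card = ∑ _s ∈ F, n :=
              Finset.sum_congr rfl (fun s hs => by rw [id_eq]; exact hFcard_n s hs)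
          _ = F.card * n := by rw [Finset.sum_const, smul_eq_mul]
      omega
    have hFq : F.card = m / n := by
      rw [← hmF, Nat.mul_div_cancel _ hnpos]
    have hcast : m / n = F.card := hFq.symm
    have hmemP : ∀ (s : Finset V), s ∈ F → ∃ j : Fin (m / n),
        ((F.equivFin.symm (Fin.cast hcast j)) : Finset V) = s := by
      intro s hs
      refine ⟨Fin.cast hFq (F.equivFin ⟨s, hs⟩), ?_⟩
      have : Fin.cast hcast (Fin.cast hFq (F.equivFin ⟨s, hs⟩)) = F.equivFin ⟨s, hs⟩ :=
        Fin.ext rfl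
      rw [this, Equiv.symm_apply_apply]
    refine ⟨fun j => ↑((F.equivFin.symm (Fin.cast hcast j)) : Finset V), ?_, ?_, ?_, ?_, ?_⟩
    · intro j1 j2 hne
      have hsne : ((F.equivFin.symm (Fin.cast hcast j1)) : Finset V)
          ≠ ((F.equivFin.symm (Fin.cast hcast j2)) : Finset V) := by
        intro h
        apply hne
        have h2 : F.equivFin.symm (Fin.cast hcast j1) = F.equivFin.symm (Fin.cast hcast j2) :=
          Subtype.ext h
        have h3 := F.equivFin.symm.injective h2
        have h4 := congrArg Fin.val h3
        exact Fin.ext h4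
      have := hdisjF _ (F.equivFin.symm (Fin.cast hcast j1)).2 _
        (F.equivFin.symm (Fin.cast hcast j2)).2 hsne
      exact Finset.disjoint_coe.mpr this
    · ext z
      simp only [Set.mem_iUnion, Finset.mem_coe, Set.mem_univ, iff_true]
      obtain ⟨j, hj⟩ := hmemP (clsF z) (Finset.mem_image_of_mem _ (Finset.mem_univ z))
      refine ⟨j, ?_⟩
      have hz : z ∈ clsF z := (hclsmem z z).mpr (hB1 z)
      rw [← hj] at hz
      exact hz
    · intro j
      show ((((F.equivFin.symm (Fin.cast hcast j)) : Finset V)) : Set V).ncard = n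
      rw [Set.ncard_coe_finset]
      exact hFcard_n _ (F.equivFin.symm (Fin.cast hcast j)).2
    · intro i
      have hne : (T i).verts.Nonempty := by
        rw [← Set.ncard_pos (Set.toFinite _), hverts i]; omega
      obtain ⟨v, hv⟩ := hne
      obtain ⟨j, hj⟩ := hmemP (clsF v) (Finset.mem_image_of_mem _ (Finset.mem_univ v))
      refine ⟨j, ?_⟩
      show (T i).verts = (((F.equivFin.symm (Fin.cast hcast j)) : Finset V) : Set V)
      rw [hj, hclscoe]
      exact (hB4 v i).mpr (mem_Av.mpr hv)
    · intro j
      obtain ⟨a, -, ha⟩ := Finset.mem_image.mp (F.equivFin.symm (Fin.cast hcast j)).2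
      have hPa : (↑((F.equivFin.symm (Fin.cast hcast j)) : Finset V) : Set V) = B a := by
        rw [← ha, hclscoe]
      show ({i : Fin t | (T i).verts
        = (↑((F.equivFin.symm (Fin.cast hcast j)) : Finset V) : Set V)}).ncard = n - 2
      have hseteq : {i : Fin t | (T i).verts
          = (↑((F.equivFin.symm (Fin.cast hcast j)) : Finset V) : Set V)}
          = ↑(Av T a) := by
        ext i
        rw [Set.mem_setOf_eq, hPa, Finset.mem_coe]
        exact hB4 a i
      rw [hseteq, Set.ncard_coe_finset]
      exact hAcard a
end

section
/- Let n ≥ 2 and let 𝒯 = {T₁,…,T_t} be a nonempty collection (with repetition allowed) of trees on a common vertex set V, each T_i having exactly n vertices (V(T_i) ⊆ V). Suppose 𝒯 contains no rainbow tree with n vertices, and let F be a rainbow tree in 𝒯 with the maximum number of vertices among all rainbow trees in 𝒯. Then for every i ∈ [t] such that E(T_i) ∩ E(F) = ∅, we have V(T_i) ∩ V(F) = ∅. -/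
open SimpleGraph

/-- If a walk starts in `S` and ends outside, some edge crosses the boundary. -/
lemma exists_boundary {W : Type*} {G : SimpleGraph W} (S : Set W) :
    ∀ {a b : W}, G.Walk a b → a ∈ S → b ∉ S →
      ∃ x y, G.Adj x y ∧ x ∈ S ∧ y ∉ S := by
  intro a b w
  induction w with
  | nil => intro ha hb; exact absurd ha hb
  | @cons a c b h p ih =>
    intro ha hb
    by_cases hc : c ∈ S
    · exact ih hc hb
    · exact ⟨a, c, h, ha, hc⟩

/-- A cycle cannot pass through a vertex with a unique neighbor. -/
lemma cycle_avoids {W : Type*} {G : SimpleGraph W} {x y : W}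
    (hyx : ∀ z, G.Adj y z → z = x) {v : W} {c : G.Walk v v}
    (hc : c.IsCycle) : y ∉ c.support := by
  classical
  intro hy
  have hc' := hc.rotate hy
  set c' := c.rotate y hy with hcdef
  obtain ⟨z, h, q, hq⟩ := SimpleGraph.Walk.not_nil_iff.mp hc'.not_nil
  have hz : z = x := hyx z h
  have h3 : 3 ≤ c'.length := hc'.three_le_length
  have hqlen : 2 ≤ q.length := by
    have : c'.length = q.length + 1 := by rw [hq]; simp
    omega
  have hqrev : ¬ q.reverse.Nil := by
    rw [SimpleGraph.Walk.nil_iff_length_eq]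
    rw [SimpleGraph.Walk.length_reverse]; omega
  obtain ⟨u2, h2, q2, hq2⟩ := SimpleGraph.Walk.not_nil_iff.mp hqrev
  have hu2 : u2 = x := hyx u2 h2
  have hmem : s(y, x) ∈ q.edges := by
    have : s(y, u2) ∈ q.reverse.edges := by rw [hq2]; simp
    rw [hu2] at this
    rwa [SimpleGraph.Walk.edges_reverse, List.mem_reverse] at this
  have hnodup : c'.edges.Nodup := hc'.edges_nodup
  rw [hq] at hnodup
  rw [SimpleGraph.Walk.edges_cons] at hnodup
  subst hz
  exact (List.nodup_cons.mp hnodup).1 hmem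

/-- A path between vertices different from `y` avoids `y`, if `y` has a unique neighbor. -/
lemma path_avoids {W : Type*} {G : SimpleGraph W} {x y : W}
    (hyx : ∀ z, G.Adj y z → z = x) {u w : W} {p : G.Walk u w}
    (hp : p.IsPath) (hu : u ≠ y) (hw : w ≠ y) : y ∉ p.support := by
  classical
  intro hy
  set t := p.takeUntil y hy with ht
  set d := p.dropUntil y hy with hd
  have htn : ¬ t.Nil := SimpleGraph.Walk.not_nil_of_ne hu
  have hdn : ¬ d.Nil := SimpleGraph.Walk.not_nil_of_ne (fun h => hw h.symm)
  obtain ⟨z, hz, q, hq⟩ := SimpleGraph.Walk.not_nil_iff.mp hdn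
  have hzx : z = x := hyx z hz
  have hmemd : s(y, x) ∈ d.edges := by subst hzx; rw [hq, SimpleGraph.Walk.edges_cons]; simp
  have htrn : ¬ t.reverse.Nil := by
    rw [SimpleGraph.Walk.nil_iff_length_eq, SimpleGraph.Walk.length_reverse]
    rw [SimpleGraph.Walk.nil_iff_length_eq] at htn
    exact htn
  obtain ⟨z2, hz2, q2, hq2⟩ := SimpleGraph.Walk.not_nil_iff.mp htrn
  have hz2x : z2 = x := hyx z2 hz2
  have hmemt : s(y, x) ∈ t.edges := by
    have : s(y, z2) ∈ t.reverse.edges := by rw [hq2]; simp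
    rw [hz2x, SimpleGraph.Walk.edges_reverse, List.mem_reverse] at this
    exact this
  have hnodup : (t.edges ++ d.edges).Nodup := by
    rw [← SimpleGraph.Walk.edges_append, SimpleGraph.Walk.take_spec p hy]
    exact hp.isTrail.edges_nodup
  exact (List.disjoint_of_nodup_append hnodup) hmemt hmemd

/-- Lift a walk in the ambient graph whose edges all belong to a subgraph. -/
lemma walk_lift {W : Type*} {G : SimpleGraph W} {H : G.Subgraph} :
    ∀ {u v : W} (p : G.Walk u v), (∀ e ∈ p.edges, e ∈ H.edgeSet) →
      ∀ (hu : u ∈ H.verts) (hv : v ∈ H.verts),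
      ∃ q : H.coe.Walk ⟨u, hu⟩ ⟨v, hv⟩, q.map H.hom = p := by
  intro u v p
  induction p with
  | nil => intro _ hu _; exact ⟨SimpleGraph.Walk.nil, rfl⟩
  | @cons a c b h p ih =>
    intro he hu hv
    have hac : H.Adj a c := by
      have := he s(a, c) (by simp)
      rwa [SimpleGraph.Subgraph.mem_edgeSet] at this
    have hc : c ∈ H.verts := hac.snd_mem
    obtain ⟨q, hq⟩ := ih (fun e hme => he e (by simp [hme])) hc hv
    exact ⟨SimpleGraph.Walk.cons (show H.coe.Adj ⟨a, hu⟩ ⟨c, hc⟩ by exact hac) q, by rw [SimpleGraph.Walk.map_cons, hq]; rfl⟩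

/-- Adding a pendant edge to a tree subgraph yields a tree subgraph. -/
lemma pendant_tree {V : Type*} {G : SimpleGraph V} {F : G.Subgraph}
    (hF : F.coe.IsTree) {x y : V} (hxy : G.Adj x y)
    (hx : x ∈ F.verts) (hy : y ∉ F.verts) :
    (F ⊔ G.subgraphOfAdj hxy).coe.IsTree := by
  classical
  set R := F ⊔ G.subgraphOfAdj hxy with hR
  have hyR : y ∈ R.verts := by
    rw [hR, Subgraph.verts_sup]; right; simp
  have hxR : x ∈ R.verts := Or.inl hx
  have huniq : ∀ z : R.verts, R.coe.Adj ⟨y, hyR⟩ z → z = ⟨x, hxR⟩ := by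
    rintro ⟨z, hz⟩ hadj
    rw [Subgraph.coe_adj] at hadj
    rcases hadj with h | h
    · exact absurd h.fst_mem hy
    · rw [subgraphOfAdj_adj] at h
      rw [Sym2.eq_iff] at h
      rcases h with ⟨h1, h2⟩ | ⟨h1, h2⟩
      · exact absurd h1 hxy.ne
      · exact Subtype.ext h1.symm
  constructor
  · have hFc : F.Connected := Subgraph.connected_iff'.mpr hF.isConnected
    have hPc : (G.subgraphOfAdj hxy).Connected := Subgraph.subgraphOfAdj_connected hxy
    have hconn : R.Connected := by
      refine Subgraph.connected_sup hFc.preconnected hPc.preconnected ⟨x, ?_⟩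
      rw [Subgraph.verts_inf]
      exact ⟨hx, by simp⟩
    exact hconn.coe
  · intro v c hc
    have hyn : (⟨y, hyR⟩ : R.verts) ∉ c.support := cycle_avoids huniq hc
    have hpc : (c.map R.hom).IsCycle := hc.map Subgraph.hom_injective
    set p := c.map R.hom with hp
    have hep : ∀ e ∈ p.edges, e ∈ F.edgeSet := by
      intro e he
      rw [hp, Walk.edges_map, List.mem_map] at he
      obtain ⟨e', he', rfl⟩ := he
      revert he'
      refine e'.ind (fun a b hab => ?_)
      have hadj : R.coe.Adj a b := Walk.adj_of_mem_edges _ hab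
      rw [Subgraph.coe_adj] at hadj
      rcases hadj with h | h
      · exact h
      · exfalso
        rw [subgraphOfAdj_adj, Sym2.eq_iff] at h
        have ha : a ∈ c.support := Walk.fst_mem_support_of_mem_edges _ hab
        have hb : b ∈ c.support := Walk.snd_mem_support_of_mem_edges _ hab
        rcases h with ⟨h1, h2⟩ | ⟨h1, h2⟩
        · exact hyn (by rwa [show (⟨y, hyR⟩ : R.verts) = b from Subtype.ext h2])
        · exact hyn (by rwa [show (⟨y, hyR⟩ : R.verts) = a from Subtype.ext h2])
    have hvF : (v : V) ∈ F.verts := by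
      have hvR : (v : V) ∈ F.verts ∪ (G.subgraphOfAdj hxy).verts := v.2
      rcases hvR with h | h
      · exact h
      · rcases h with h | h
        · exact h ▸ hx
        · exfalso
          apply hyn
          rw [show (⟨y, hyR⟩ : R.verts) = v from Subtype.ext (Set.mem_singleton_iff.mp h).symm]
          exact Walk.start_mem_support c
    obtain ⟨q, hq⟩ := walk_lift p hep hvF hvF
    have : q.IsCycle := by
      rw [← Walk.map_isCycle_iff_of_injective (p := q) Subgraph.hom_injective, hq]
      exact hpc
    exact hF.IsAcyclic _ this

/-- A finite tree subgraph with at least two vertices has a leaf. -/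
lemma exists_leaf {V : Type} [Fintype V] {G : SimpleGraph V} {R : G.Subgraph}
    (hR : R.coe.IsTree) (h2 : 2 ≤ R.verts.ncard) :
    ∃ Y X : R.verts, R.coe.Adj Y X ∧ ∀ Z, R.coe.Adj Y Z → Z = X := by
  classical
  haveI : Fintype ↥R.verts := Fintype.ofFinite _
  haveI : DecidableRel R.coe.Adj := Classical.decRel _
  have hcard : Fintype.card ↥R.verts = R.verts.ncard := by
    rw [← Nat.card_coe_set_eq, Nat.card_eq_fintype_card]
  have hedge : R.coe.edgeFinset.card + 1 = Fintype.card ↥R.verts := hR.card_edgeFinset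
  have hsum := SimpleGraph.sum_degrees_eq_twice_card_edges (V := ↥R.verts) R.coe
  have deg_eq : ∀ (Y : ↥R.verts) (i1 i2 : Fintype ↥(R.coe.neighborSet Y)),
      @SimpleGraph.degree _ R.coe Y i1 = @SimpleGraph.degree _ R.coe Y i2 :=
    fun Y i1 i2 => congrArg (fun i => @SimpleGraph.degree _ R.coe Y i) (Subsingleton.elim i1 i2)
  have hle : ∃ Y : ↥R.verts, R.coe.degree Y ≤ 1 := by
    by_contra h
    push_neg at h
    have h2le : ∀ Y ∈ Finset.univ, 2 ≤ R.coe.degree Y := fun Y _ => h Y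
    have hb := Finset.card_nsmul_le_sum Finset.univ (fun Y => R.coe.degree Y) 2 h2le
    have hsum' : (∑ Y : ↥R.verts, R.coe.degree Y) = 2 * R.coe.edgeFinset.card := by
      convert hsum using 3
    have hb2 := hb.trans_eq hsum'
    rw [Finset.card_univ, hcard] at hb2
    simp only [smul_eq_mul] at hb2
    omega
  obtain ⟨Y, hY⟩ := hle
  obtain ⟨Z, hZY⟩ : ∃ Z : ↥R.verts, Z ≠ Y :=
    Fintype.exists_ne_of_one_lt_card (by omega) Y
  obtain ⟨wk⟩ := hR.isConnected.preconnected Y Z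
  have hwn : ¬ wk.Nil := Walk.not_nil_of_ne (fun h => hZY h.symm)
  obtain ⟨X, hadj, q, -⟩ := Walk.not_nil_iff.mp hwn
  refine ⟨Y, X, hadj, fun W hW => ?_⟩
  have h1 : X ∈ R.coe.neighborFinset Y := (mem_neighborFinset _ _ _).mpr hadj
  have h2' : W ∈ R.coe.neighborFinset Y := (mem_neighborFinset _ _ _).mpr hW
  have hle1 : (R.coe.neighborFinset Y).card ≤ 1 := hY
  exact Finset.card_le_one.mp hle1 _ h2' _ h1

/-- Deleting a leaf of a tree subgraph keeps it a tree. -/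
lemma delete_leaf_tree {V : Type} [Fintype V] {G : SimpleGraph V} {R : G.Subgraph}
    (hR : R.coe.IsTree) (h2 : 2 ≤ R.verts.ncard) :
    ∃ y ∈ R.verts, (R.deleteVerts {y}).coe.IsTree := by
  classical
  obtain ⟨Y, X, hadj, huniq⟩ := exists_leaf hR h2
  refine ⟨(Y : V), Y.2, ?_⟩
  set R' := R.deleteVerts {(Y : V)} with hR'
  have hle : R' ≤ R := Subgraph.deleteVerts_le
  constructor
  · rw [connected_iff]
    constructor
    · rintro u w
      have huY : (u : V) ≠ (Y : V) := fun h => u.2.2 (Set.mem_singleton_iff.mpr h)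
      have hwY : (w : V) ≠ (Y : V) := fun h => w.2.2 (Set.mem_singleton_iff.mpr h)
      set U : ↥R.verts := ⟨(u : V), u.2.1⟩ with hU
      set W : ↥R.verts := ⟨(w : V), w.2.1⟩ with hW
      obtain ⟨wk⟩ := hR.isConnected.preconnected U W
      have hpath : wk.bypass.IsPath := Walk.bypass_isPath wk
      have hUY : U ≠ Y := fun h => huY (congrArg Subtype.val h)
      have hWY : W ≠ Y := fun h => hwY (congrArg Subtype.val h)
      have hYn : Y ∉ wk.bypass.support := path_avoids huniq hpath hUY hWY
      set p := wk.bypass.map R.hom with hp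
      have hep : ∀ e ∈ p.edges, e ∈ R'.edgeSet := by
        intro e he
        rw [hp, Walk.edges_map, List.mem_map] at he
        obtain ⟨e', he', rfl⟩ := he
        revert he'
        refine e'.ind (fun a b hab => ?_)
        have hadj' : R.coe.Adj a b := Walk.adj_of_mem_edges _ hab
        have ha : a ∈ wk.bypass.support := Walk.fst_mem_support_of_mem_edges _ hab
        have hb : b ∈ wk.bypass.support := Walk.snd_mem_support_of_mem_edges _ hab
        have haY : (a : V) ∉ ({(Y : V)} : Set V) := by
          intro h
          exact hYn (by rwa [show Y = a from Subtype.ext (Set.mem_singleton_iff.mp h).symm])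
        have hbY : (b : V) ∉ ({(Y : V)} : Set V) := by
          intro h
          exact hYn (by rwa [show Y = b from Subtype.ext (Set.mem_singleton_iff.mp h).symm])
        rw [Sym2.map_pair_eq, Subgraph.mem_edgeSet]
        exact Subgraph.deleteVerts_adj.mpr ⟨a.2, haY, b.2, hbY, hadj'⟩
      obtain ⟨q, -⟩ := walk_lift p hep u.2 w.2
      exact ⟨q⟩
    · exact Set.nonempty_coe_sort.mpr (Set.nonempty_of_ncard_ne_zero (by
        rw [Subgraph.deleteVerts_verts]
        have := Set.ncard_diff_singleton_add_one Y.2 (Set.toFinite _)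
        omega))
  · intro v c hc
    have := hc.map (Subgraph.inclusion.injective hle)
    exact hR.IsAcyclic _ this

/-- Shrinking a rainbow tree by one vertex. -/
lemma rainbow_shrink {V ι : Type} [Fintype V] (T : ι → (⊤ : SimpleGraph V).Subgraph)
    (R : (⊤ : SimpleGraph V).Subgraph) (hR : IsRainbowSubtree T R)
    (h2 : 2 ≤ R.verts.ncard) :
    ∃ R', IsRainbowSubtree T R' ∧ R'.verts.ncard + 1 = R.verts.ncard := by
  obtain ⟨y, hy, htree⟩ := delete_leaf_tree hR.1 h2
  obtain ⟨g, hginj, hgmem⟩ := hR.2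
  have hsub : (R.deleteVerts {y}).edgeSet ⊆ R.edgeSet :=
    SimpleGraph.Subgraph.edgeSet_mono SimpleGraph.Subgraph.deleteVerts_le
  refine ⟨R.deleteVerts {y}, ⟨htree, g, hginj.mono hsub, fun e he => hgmem e (hsub he)⟩, ?_⟩
  rw [SimpleGraph.Subgraph.deleteVerts_verts]
  exact Set.ncard_diff_singleton_add_one hy (Set.toFinite _)

lemma rainbow_down {V ι : Type} [Fintype V] (T : ι → (⊤ : SimpleGraph V).Subgraph)
    {n : ℕ} (hn : 1 ≤ n) :
    ∀ (k : ℕ) (R : (⊤ : SimpleGraph V).Subgraph), IsRainbowSubtree T R →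
      R.verts.ncard = n + k → HasRainbowTree T n := by
  intro k
  induction k with
  | zero => exact fun R hR h => ⟨R, hR, by omega⟩
  | succ k ih =>
    intro R hR hcard
    obtain ⟨R', hR', hcard'⟩ := rainbow_shrink T R hR (by omega)
    exact ih R' hR' (by omega)

theorem max_rainbow_tree_vertex_disjoint {V : Type} [Fintype V]
    (n t : ℕ) (hn : 2 ≤ n) (ht : 1 ≤ t)
    (T : Fin t → (⊤ : SimpleGraph V).Subgraph)
    (htree : ∀ i, (T i).coe.IsTree) (hverts : ∀ i, (T i).verts.ncard = n)
    (hfree : ¬ HasRainbowTree T n)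
    (F : (⊤ : SimpleGraph V).Subgraph)
    (hF : IsRainbowSubtree T F)
    (hmax : ∀ R, IsRainbowSubtree T R → R.verts.ncard ≤ F.verts.ncard) :
    ∀ i, (T i).edgeSet ∩ F.edgeSet = ∅ → (T i).verts ∩ F.verts = ∅ := by
  intro i hE
  by_contra hne
  obtain ⟨v, hvT, hvF⟩ := Set.nonempty_iff_ne_empty.mpr hne
  -- F has fewer than n vertices
  have hlt : F.verts.ncard < n := by
    by_contra hge
    push_neg at hge
    exact hfree (rainbow_down T (by omega) (F.verts.ncard - n) F hF (by omega))
  -- T i has a vertex outside F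
  have hout : ∃ w ∈ (T i).verts, w ∉ F.verts := by
    by_contra h
    push_neg at h
    have := Set.ncard_le_ncard h (Set.toFinite _)
    rw [hverts i] at this
    omega
  obtain ⟨w, hwT, hwF⟩ := hout
  -- find a boundary edge of T i
  obtain ⟨wk⟩ := (htree i).isConnected.preconnected ⟨v, hvT⟩ ⟨w, hwT⟩
  obtain ⟨a, b, hab, haF, hbF⟩ :=
    exists_boundary {z : ↥(T i).verts | (z : V) ∈ F.verts} wk hvF hwF
  have habT : (T i).Adj (a : V) (b : V) := hab
  have hne' : (a : V) ≠ (b : V) := habT.ne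
  have htop : (⊤ : SimpleGraph V).Adj (a : V) (b : V) := by simp [hne']
  -- the enlarged rainbow tree
  set R := F ⊔ (⊤ : SimpleGraph V).subgraphOfAdj htop with hRdef
  have htreeR : R.coe.IsTree := pendant_tree hF.1 htop haF hbF
  have hedges : R.edgeSet = insert s((a : V), (b : V)) F.edgeSet := by
    rw [hRdef, SimpleGraph.Subgraph.edgeSet_sup, SimpleGraph.edgeSet_subgraphOfAdj]
    rw [Set.union_comm]
    rfl
  obtain ⟨g, hginj, hgmem⟩ := hF.2
  have hkey : s((a : V), (b : V)) ∉ F.edgeSet := by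
    intro h
    exact hbF (SimpleGraph.Subgraph.Adj.snd_mem (SimpleGraph.Subgraph.mem_edgeSet.mp h))
  have hkeyi : ∀ e ∈ F.edgeSet, g e ≠ i := by
    intro e he hgi
    have h1 : e ∈ (T i).edgeSet := hgi ▸ hgmem e he
    have h2 : e ∈ (T i).edgeSet ∩ F.edgeSet := ⟨h1, he⟩
    rw [hE] at h2
    exact h2
  classical
  set g' : Sym2 V → Fin t := fun e => if e = s((a : V), (b : V)) then i else g e with hg'
  have hrainbowR : IsRainbowSubtree T R := by
    refine ⟨htreeR, g', ?_, ?_⟩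
    · intro e1 h1 e2 h2 heq
      rw [hedges] at h1 h2
      rcases h1 with rfl | h1 <;> rcases h2 with rfl | h2'
      · rfl
      · exfalso
        have hne2 : e2 ≠ s((a : V), (b : V)) := fun h => hkey (h ▸ h2')
        rw [hg'] at heq
        simp only [if_pos rfl, if_neg hne2] at heq
        exact hkeyi e2 h2' heq.symm
      · exfalso
        have hne1 : e1 ≠ s((a : V), (b : V)) := fun h => hkey (h ▸ h1)
        rw [hg'] at heq
        simp only [if_pos rfl, if_neg hne1] at heq
        exact hkeyi e1 h1 heq
      · have hne1 : e1 ≠ s((a : V), (b : V)) := fun h => hkey (h ▸ h1)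
        have hne2 : e2 ≠ s((a : V), (b : V)) := fun h => hkey (h ▸ h2')
        rw [hg'] at heq
        simp only [if_neg hne1, if_neg hne2] at heq
        exact hginj h1 h2' heq
    · intro e he
      rw [hedges] at he
      rcases he with rfl | he
      · rw [hg']
        simp only [if_pos rfl]
        exact SimpleGraph.Subgraph.mem_edgeSet.mpr habT
      · have hne1 : e ≠ s((a : V), (b : V)) := fun h => hkey (h ▸ he)
        rw [hg']
        simp only [if_neg hne1]
        exact hgmem e he
  have hcardR : R.verts.ncard = F.verts.ncard + 1 := by
    have hv : R.verts = insert (b : V) F.verts := by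
      rw [hRdef, SimpleGraph.Subgraph.verts_sup, subgraphOfAdj_verts]
      ext z
      simp only [Set.mem_union, Set.mem_insert_iff, Set.mem_singleton_iff]
      constructor
      · rintro (h | h | h)
        · exact Or.inr h
        · exact Or.inr (h ▸ haF)
        · exact Or.inl h
      · rintro (h | h)
        · exact Or.inr (Or.inr h)
        · exact Or.inl h
    rw [hv]
    exact Set.ncard_insert_of_notMem hbF (Set.toFinite _)
  have := hmax R hrainbowR
  omega
end
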